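/- For Hopf algebras H and H' over a field k, exp₀(H ⊗ H') = lcm(exp₀(H), exp₀(H')), where the lcm with ∞ is ∞. -/

import Mathlib

open TensorProduct

noncomputable section

variable (k H : Type*) [CommRing k] [Ring H] [Bialgebra k H]

/-- Convolution product `f * g = m ∘ (f ⊗ g) ∘ Δ` on linear endomorphisms. -/
def conv (f g : Module.End k H) : Module.End k H :=
  LinearMap.mul' k H ∘ₗ TensorProduct.map f g ∘ₗ Coalgebra.comul

/-- The convolution unit `u ∘ ε`. -/
def convOne : Module.End k H := (Algebra.linearMap k H) ∘ₗ Coalgebra.counit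

/-- `convSeq F n = m_n ∘ (F 0 ⊗ F 1 ⊗ ⋯ ⊗ F (n-1)) ∘ Δ_n` (as an iterated convolution). -/
def convSeq : (ℕ → Module.End k H) → ℕ → Module.End k H
  | _, 0 => convOne k H
  | F, n + 1 => conv k H (F 0) (convSeq (fun j => F (j + 1)) n)

/-- The `n`-th Sweedler power `[n] = m_n ∘ Δ_n` as a linear endomorphism. -/
def sweedlerPow (n : ℕ) : Module.End k H := convSeq k H (fun _ => LinearMap.id) n

/-- The twisted Sweedler power `m_n ∘ (id ⊗ T ⊗ T² ⊗ ⋯ ⊗ T^(n-1)) ∘ Δ_n`. -/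
def twistPow (T : Module.End k H) (n : ℕ) : Module.End k H :=
  convSeq k H (fun j => T ^ j) n

/-- `exp₀(H)`: the least `n ≥ 1` with `[n] = u ∘ ε`, in `ℕ ∪ {∞}` (`sInf ∅ = ∞`). -/
def exp0 : ℕ∞ :=
  sInf {e : ℕ∞ | ∃ n : ℕ, e = n ∧ 0 < n ∧ sweedlerPow k H n = convOne k H}

/-- The `T`-twisted exponent: least `n ≥ 1` with
`m_n ∘ (id ⊗ T ⊗ ⋯ ⊗ T^(n-1)) ∘ Δ_n = u ∘ ε`, in `ℕ ∪ {∞}`.  For `T = S⁻²` this is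
`exp(H)` and for `T = S^(2i)` this is the twisted exponent `exp_{2i}(H)`. -/
def expAt (T : Module.End k H) : ℕ∞ :=
  sInf {e : ℕ∞ | ∃ n : ℕ, e = n ∧ 0 < n ∧ twistPow k H T n = convOne k H}

universe u

/-! ### Auxiliary lemmas -/

section Aux

open Coalgebra

lemma conv_apply_repr (f g : Module.End k H) (x : H) (repr : Coalgebra.Repr k x (H × H)) :
    conv k H f g x = ∑ i ∈ repr.index, f (repr.left i) * g (repr.right i) := by
  simp only [conv, LinearMap.comp_apply, ← repr.eq, map_sum, TensorProduct.map_tmul,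
    LinearMap.mul'_apply]

lemma convOne_conv (g : Module.End k H) : conv k H (convOne k H) g = g := by
  ext x
  have h := Coalgebra.sum_counit_tmul_map_eq (R := k) g x (repr := ℛ k x)
  apply_fun (TensorProduct.lid k H) at h
  simp only [map_sum, TensorProduct.lid_tmul, one_smul] at h
  rw [conv_apply_repr k H _ _ x (ℛ k x)]
  simp only [convOne, LinearMap.comp_apply, Algebra.linearMap_apply, ← Algebra.smul_def]
  exact h

lemma conv_convOne (f : Module.End k H) : conv k H f (convOne k H) = f := by
  ext x
  have h := Coalgebra.sum_map_tmul_counit_eq (R := k) f x (repr := ℛ k x)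
  apply_fun (TensorProduct.rid k H) at h
  simp only [map_sum, TensorProduct.rid_tmul, one_smul] at h
  rw [conv_apply_repr k H _ _ x (ℛ k x)]
  simp only [convOne, LinearMap.comp_apply, Algebra.linearMap_apply]
  rw [← h]
  congr 1; ext i
  rw [← Algebra.commutes, ← Algebra.smul_def]

lemma conv_assoc (f g h : Module.End k H) :
    conv k H (conv k H f g) h = conv k H f (conv k H g h) := by
  ext x
  have key := Coalgebra.sum_map_tmul_tmul_eq (R := k) f g h x (repr := ℛ k x)
    (a₁ := fun i => ℛ k ((ℛ k x).left i)) (a₂ := fun i => ℛ k ((ℛ k x).right i))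
  apply_fun (LinearMap.mul' k H ∘ₗ LinearMap.lTensor H (LinearMap.mul' k H)) at key
  simp only [map_sum, LinearMap.comp_apply, LinearMap.lTensor_tmul,
    LinearMap.mul'_apply] at key
  rw [conv_apply_repr k H _ _ x (ℛ k x), conv_apply_repr k H _ _ x (ℛ k x)]
  calc ∑ i ∈ (ℛ k x).index, conv k H f g ((ℛ k x).left i) * h ((ℛ k x).right i)
      = ∑ i ∈ (ℛ k x).index, ∑ j ∈ (ℛ k ((ℛ k x).left i)).index,
          f ((ℛ k ((ℛ k x).left i)).left j) * (g ((ℛ k ((ℛ k x).left i)).right j)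
            * h ((ℛ k x).right i)) := by
        refine Finset.sum_congr rfl fun i _ => ?_
        rw [conv_apply_repr k H _ _ _ (ℛ k ((ℛ k x).left i)), Finset.sum_mul]
        simp [mul_assoc]
    _ = ∑ i ∈ (ℛ k x).index, f ((ℛ k x).left i) * conv k H g h ((ℛ k x).right i) := by
        rw [← key]
        refine Finset.sum_congr rfl fun i _ => ?_
        rw [conv_apply_repr k H _ _ _ (ℛ k ((ℛ k x).right i)), Finset.mul_sum]

lemma sweedlerPow_succ (n : ℕ) :
    sweedlerPow k H (n + 1) = conv k H LinearMap.id (sweedlerPow k H n) := rfl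

lemma sweedlerPow_add (a b : ℕ) :
    sweedlerPow k H (a + b) = conv k H (sweedlerPow k H a) (sweedlerPow k H b) := by
  induction a with
  | zero => rw [Nat.zero_add]; exact (convOne_conv k H _).symm
  | succ a ih =>
      rw [Nat.succ_add, sweedlerPow_succ, sweedlerPow_succ, ih, ← conv_assoc]

lemma sweedlerPow_mul_eq (e q : ℕ) (he : sweedlerPow k H e = convOne k H) :
    sweedlerPow k H (e * q) = convOne k H := by
  induction q with
  | zero => rfl
  | succ q ih => rw [Nat.mul_succ, sweedlerPow_add, ih, he, convOne_conv]

lemma sweedlerPow_of_dvd {e n : ℕ} (he : sweedlerPow k H e = convOne k H) (h : e ∣ n) :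
    sweedlerPow k H n = convOne k H := by
  obtain ⟨q, rfl⟩ := h
  exact sweedlerPow_mul_eq k H e q he

lemma convOne_apply_one : convOne k H 1 = 1 := by
  simp [convOne]

lemma sweedlerPow_apply_one (n : ℕ) : sweedlerPow k H n 1 = 1 := by
  induction n with
  | zero => exact convOne_apply_one k H
  | succ n ih =>
      rw [sweedlerPow_succ]
      show LinearMap.mul' k H (TensorProduct.map _ _ (Coalgebra.comul 1)) = 1
      rw [Bialgebra.comul_one, Algebra.TensorProduct.one_def, TensorProduct.map_tmul,
        LinearMap.mul'_apply]
      simp [ih]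

/-- The set of positive `n` with `[n] = u ∘ ε`. -/
def expSet : Set ℕ := {n | 0 < n ∧ sweedlerPow k H n = convOne k H}

lemma sInf_expSet_dvd {n : ℕ} (hn : n ∈ expSet k H) : sInf (expSet k H) ∣ n := by
  set e := sInf (expSet k H) with he
  have heS : e ∈ expSet k H := Nat.sInf_mem ⟨n, hn⟩
  have hdecomp : n = e * (n / e) + n % e := (Nat.div_add_mod n e).symm
  have hr : sweedlerPow k H (n % e) = convOne k H := by
    have := hn.2
    rw [hdecomp, sweedlerPow_add, sweedlerPow_mul_eq k H e _ heS.2, convOne_conv] at this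
    exact this
  rcases Nat.eq_zero_or_pos (n % e) with h0 | hpos
  · exact Nat.dvd_of_mod_eq_zero h0
  · exfalso
    have hmem : n % e ∈ expSet k H := ⟨hpos, hr⟩
    have := Nat.sInf_le hmem
    have hlt := Nat.mod_lt n heS.1
    omega

lemma exp0_eq_coe (h : (expSet k H).Nonempty) :
    exp0 k H = ((sInf (expSet k H) : ℕ) : ℕ∞) := by
  apply le_antisymm
  · exact sInf_le ⟨sInf (expSet k H), rfl, (Nat.sInf_mem h).1, (Nat.sInf_mem h).2⟩
  · apply le_sInf
    rintro e ⟨n, rfl, hn1, hn2⟩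
    exact ENat.coe_le_coe.mpr (Nat.sInf_le (show n ∈ expSet k H from ⟨hn1, hn2⟩))

lemma exp0_eq_top (h : ¬(expSet k H).Nonempty) : exp0 k H = ⊤ := by
  rw [exp0]
  convert (sInf_empty (α := ℕ∞)) using 2
  · rfl
  ext e
  simp only [Set.mem_setOf_eq, Set.mem_empty_iff_false, iff_false]
  rintro ⟨n, rfl, hn1, hn2⟩
  exact h ⟨n, hn1, hn2⟩

lemma exp0_ne_zero : exp0 k H ≠ 0 := by
  by_cases h : (expSet k H).Nonempty
  · rw [exp0_eq_coe k H h]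
    have hpos := (Nat.sInf_mem h).1
    simp only [ne_eq, Nat.cast_eq_zero]
    omega
  · rw [exp0_eq_top k H h]; simp

end Aux

section ENatAux

lemma enat_dvd_top {x : ℕ∞} (hx : x ≠ 0) : x ∣ ⊤ := by
  induction x using ENat.recTopCoe with
  | top => exact ⟨1, by simp⟩
  | coe a => exact ⟨⊤, (ENat.mul_top (by exact_mod_cast hx)).symm⟩

lemma enat_coe_dvd_coe_of_dvd {a b : ℕ} (h : a ∣ b) : (a : ℕ∞) ∣ (b : ℕ∞) := by
  obtain ⟨c, rfl⟩ := h
  exact ⟨(c : ℕ∞), by rw [← ENat.coe_mul]⟩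

lemma enat_dvd_coe {a b : ℕ} (h : (a : ℕ∞) ∣ (b : ℕ∞)) : a ∣ b := by
  obtain ⟨c, hc⟩ := h
  induction c using ENat.recTopCoe with
  | top =>
      rcases eq_or_ne a 0 with rfl | ha
      · simp at hc
        simp [hc]
      · rw [ENat.mul_top (by exact_mod_cast ha)] at hc
        exact absurd hc.symm (ENat.top_ne_coe b)
  | coe c =>
      refine ⟨c, ?_⟩
      exact_mod_cast hc

lemma enat_top_not_dvd_coe {b : ℕ} (hb : 0 < b) : ¬ ((⊤ : ℕ∞) ∣ (b : ℕ∞)) := by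
  rintro ⟨c, hc⟩
  rcases eq_or_ne c 0 with rfl | hc0
  · simp at hc; omega
  · rw [ENat.top_mul hc0] at hc
    exact ENat.top_ne_coe b hc.symm

end ENatAux

section Tensor

open Coalgebra

variable (k H H' : Type u) [CommRing k] [Ring H] [Bialgebra k H] [Ring H'] [Bialgebra k H']

lemma convOne_tensor :
    convOne k (H ⊗[k] H') = TensorProduct.map (convOne k H) (convOne k H') := by
  apply TensorProduct.ext'
  intro x y
  simp only [convOne, LinearMap.comp_apply, TensorProduct.map_tmul,
    Algebra.linearMap_apply, TensorProduct.counit_tmul, smul_eq_mul, mul_comm,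
    TensorProduct.map_tmul, LinearMap.mul'_apply, Algebra.algebraMap_eq_smul_one,
    Algebra.TensorProduct.one_def, smul_tmul', smul_tmul, smul_smul]

lemma comul_tmul_repr (x : H) (y : H') :
    Coalgebra.comul (R := k) (x ⊗ₜ[k] y) =
      ∑ i ∈ (ℛ k x).index, ∑ j ∈ (ℛ k y).index,
        ((ℛ k x).left i ⊗ₜ[k] (ℛ k y).left j) ⊗ₜ[k]
          ((ℛ k x).right i ⊗ₜ[k] (ℛ k y).right j) := by
  have hx := (ℛ k x).eq
  have hy := (ℛ k y).eq
  rw [TensorProduct.comul_def]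
  simp only [LinearMap.comp_apply, TensorProduct.map_tmul, ← hx, ← hy,
    TensorProduct.sum_tmul, TensorProduct.tmul_sum, map_sum, LinearEquiv.coe_coe,
    TensorProduct.tensorTensorTensorComm_tmul,
      TensorProduct.AlgebraTensorModule.map_tmul,
      TensorProduct.AlgebraTensorModule.tensorTensorTensorComm_tmul]
  exact Finset.sum_comm

lemma conv_map (f g : Module.End k H) (f' g' : Module.End k H') :
    conv k (H ⊗[k] H') (TensorProduct.map f f') (TensorProduct.map g g') =
      TensorProduct.map (conv k H f g) (conv k H' f' g') := by
  apply TensorProduct.ext'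
  intro x y
  rw [show conv k (H ⊗[k] H') (TensorProduct.map f f') (TensorProduct.map g g') (x ⊗ₜ[k] y)
      = LinearMap.mul' k (H ⊗[k] H')
        (TensorProduct.map (TensorProduct.map f f') (TensorProduct.map g g')
          (Coalgebra.comul (x ⊗ₜ[k] y))) from rfl,
    comul_tmul_repr]
  simp only [map_sum, TensorProduct.map_tmul, LinearMap.mul'_apply,
    Algebra.TensorProduct.tmul_mul_tmul]
  rw [conv_apply_repr k H f g x (ℛ k x),
    conv_apply_repr k H' f' g' y (ℛ k y), TensorProduct.sum_tmul]
  refine Finset.sum_congr rfl fun i _ => ?_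
  rw [TensorProduct.tmul_sum]

lemma sweedlerPow_tensor (n : ℕ) :
    sweedlerPow k (H ⊗[k] H') n =
      TensorProduct.map (sweedlerPow k H n) (sweedlerPow k H' n) := by
  induction n with
  | zero => exact convOne_tensor k H H'
  | succ n ih =>
      rw [sweedlerPow_succ, ih, show (LinearMap.id : Module.End k (H ⊗[k] H'))
        = TensorProduct.map LinearMap.id LinearMap.id from (TensorProduct.map_id).symm,
        conv_map]
      rfl

lemma sweedlerPow_tensor_iff (n : ℕ) :
    sweedlerPow k (H ⊗[k] H') n = convOne k (H ⊗[k] H') ↔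
      sweedlerPow k H n = convOne k H ∧ sweedlerPow k H' n = convOne k H' := by
  constructor
  · intro h
    rw [sweedlerPow_tensor, convOne_tensor] at h
    constructor
    · ext x
      have h1 := LinearMap.congr_fun h (x ⊗ₜ[k] (1 : H'))
      simp only [TensorProduct.map_tmul, sweedlerPow_apply_one, convOne_apply_one] at h1
      have h2 := congrArg (fun z => TensorProduct.rid k H
        (LinearMap.lTensor H (Coalgebra.counit (R := k) (A := H')) z)) h1
      simpa [LinearMap.lTensor_tmul, Bialgebra.counit_one] using h2
    · ext y
      have h1 := LinearMap.congr_fun h ((1 : H) ⊗ₜ[k] y)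
      simp only [TensorProduct.map_tmul, sweedlerPow_apply_one, convOne_apply_one] at h1
      have h2 := congrArg (fun z => TensorProduct.lid k H'
        (LinearMap.rTensor H' (Coalgebra.counit (R := k) (A := H)) z)) h1
      simpa [LinearMap.rTensor_tmul, Bialgebra.counit_one] using h2
  · rintro ⟨h1, h2⟩
    rw [sweedlerPow_tensor, convOne_tensor, h1, h2]

end Tensor

/-- `exp₀(H ⊗ H')` is the least common multiple of `exp₀(H)` and `exp₀(H')`
(in the divisibility order on `ℕ ∪ {∞}`, where `lcm` with `∞` is `∞`). -/
theorem stmt5 (k H H' : Type u) [Field k] [Ring H] [HopfAlgebra k H]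
    [Ring H'] [HopfAlgebra k H'] :
    exp0 k H ∣ exp0 k (H ⊗[k] H') ∧ exp0 k H' ∣ exp0 k (H ⊗[k] H') ∧
      ∀ m : ℕ∞, exp0 k H ∣ m → exp0 k H' ∣ m → exp0 k (H ⊗[k] H') ∣ m := by
  have hmem : ∀ n : ℕ, n ∈ expSet k (H ⊗[k] H') ↔ n ∈ expSet k H ∧ n ∈ expSet k H' := by
    intro n
    simp only [expSet, Set.mem_setOf_eq, sweedlerPow_tensor_iff k H H' n]
    tauto
  refine ⟨?_, ?_, ?_⟩
  · -- exp0 H ∣ exp0 (H ⊗ H')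
    by_cases hT : (expSet k (H ⊗[k] H')).Nonempty
    · obtain ⟨n, hn⟩ := hT
      have hS : (expSet k H).Nonempty := ⟨n, ((hmem n).1 hn).1⟩
      rw [exp0_eq_coe k H hS, exp0_eq_coe k (H ⊗[k] H') ⟨n, hn⟩]
      refine enat_coe_dvd_coe_of_dvd (sInf_expSet_dvd k H ?_)
      exact ((hmem _).1 (Nat.sInf_mem ⟨n, hn⟩)).1
    · rw [exp0_eq_top k (H ⊗[k] H') hT]
      exact enat_dvd_top (exp0_ne_zero k H)
  · by_cases hT : (expSet k (H ⊗[k] H')).Nonempty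
    · obtain ⟨n, hn⟩ := hT
      have hS : (expSet k H').Nonempty := ⟨n, ((hmem n).1 hn).2⟩
      rw [exp0_eq_coe k H' hS, exp0_eq_coe k (H ⊗[k] H') ⟨n, hn⟩]
      refine enat_coe_dvd_coe_of_dvd (sInf_expSet_dvd k H' ?_)
      exact ((hmem _).1 (Nat.sInf_mem ⟨n, hn⟩)).2
    · rw [exp0_eq_top k (H ⊗[k] H') hT]
      exact enat_dvd_top (exp0_ne_zero k H')
  · intro m h1 h2
    induction m using ENat.recTopCoe with
    | top => exact enat_dvd_top (exp0_ne_zero k (H ⊗[k] H'))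
    | coe n =>
        rcases Nat.eq_zero_or_pos n with rfl | hn
        · exact (by exact_mod_cast dvd_zero _ : exp0 k (H ⊗[k] H') ∣ ((0 : ℕ) : ℕ∞))
        · -- exp0 H and exp0 H' are finite and divide n
          have hS : (expSet k H).Nonempty := by
            by_contra hc
            rw [exp0_eq_top k H hc] at h1
            exact enat_top_not_dvd_coe hn h1
          have hS' : (expSet k H').Nonempty := by
            by_contra hc
            rw [exp0_eq_top k H' hc] at h2
            exact enat_top_not_dvd_coe hn h2
          rw [exp0_eq_coe k H hS] at h1
          rw [exp0_eq_coe k H' hS'] at h2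
          have hd1 : sInf (expSet k H) ∣ n := enat_dvd_coe h1
          have hd2 : sInf (expSet k H') ∣ n := enat_dvd_coe h2
          have hn1 : sweedlerPow k H n = convOne k H :=
            sweedlerPow_of_dvd k H (Nat.sInf_mem hS).2 hd1
          have hn2 : sweedlerPow k H' n = convOne k H' :=
            sweedlerPow_of_dvd k H' (Nat.sInf_mem hS').2 hd2
          have hnT : n ∈ expSet k (H ⊗[k] H') := (hmem n).2 ⟨⟨hn, hn1⟩, ⟨hn, hn2⟩⟩
          rw [exp0_eq_coe k (H ⊗[k] H') ⟨n, hnT⟩]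
          exact enat_coe_dvd_coe_of_dvd (sInf_expSet_dvd k (H ⊗[k] H') hnT)
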